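/- For every x ∈ (0, π/2) and every integer m ≥ 2, |cos x - (sin x / x)³ - Σ_{k=2}^{m} (-1)^{k+1} A(k) x^{2k}| < A(m+1) x^{2m+2}. -/

import Mathlib

open Real Finset

/-- The coefficient `A(k) = (3^(2k+3) - 32k³ - 96k² - 88k - 27) / (4·(2k+3)!)`. -/
noncomputable def wchA (k : ℕ) : ℝ :=
  ((3 : ℝ) ^ (2 * k + 3) - 32 * (k : ℝ) ^ 3 - 96 * (k : ℝ) ^ 2 - 88 * (k : ℝ) - 27) /
    (4 * (Nat.factorial (2 * k + 3) : ℝ))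

lemma wch_key_nat : ∀ k : ℕ, 2 ≤ k →
    2 * (32 * k ^ 3 + 96 * k ^ 2 + 88 * k + 27) ≤ 3 ^ (2 * k + 3) := by
  intro k hk
  induction k with
  | zero => omega
  | succ n ih =>
    rcases Nat.lt_or_ge n 2 with h | h
    · interval_cases n
      · omega
      · norm_num
    · have hn := ih h
      have h9 : 3 ^ (2 * (n + 1) + 3) = 9 * 3 ^ (2 * n + 3) := by ring
      rw [h9]
      nlinarith [hn, sq_nonneg n, n.zero_le]

lemma wch_num_lb {k : ℕ} (hk : 2 ≤ k) :
    (3 : ℝ) ^ (2 * k + 3) / 2 ≤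
      (3 : ℝ) ^ (2 * k + 3) - 32 * (k : ℝ) ^ 3 - 96 * (k : ℝ) ^ 2 - 88 * (k : ℝ) - 27 := by
  have h := wch_key_nat k hk
  have h' : (2 : ℝ) * (32 * (k : ℝ) ^ 3 + 96 * (k : ℝ) ^ 2 + 88 * (k : ℝ) + 27)
      ≤ (3 : ℝ) ^ (2 * k + 3) := by exact_mod_cast h
  linarith

lemma wchA_pos {k : ℕ} (hk : 2 ≤ k) : 0 < wchA k := by
  have h := wch_num_lb hk
  have hp : (0 : ℝ) < (3 : ℝ) ^ (2 * k + 3) := by positivity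
  have hf : (0 : ℝ) < (Nat.factorial (2 * k + 3) : ℝ) := by
    exact_mod_cast Nat.factorial_pos _
  unfold wchA
  apply div_pos (by linarith) (by linarith)

lemma wch_fact_succ (k : ℕ) :
    ((Nat.factorial (2 * (k + 1) + 3) : ℝ)) =
      (2 * (k : ℝ) + 5) * (2 * (k : ℝ) + 4) * (Nat.factorial (2 * k + 3) : ℝ) := by
  have : 2 * (k + 1) + 3 = (2 * k + 4) + 1 := by omega
  rw [this, Nat.factorial_succ, show 2 * k + 4 = (2 * k + 3) + 1 from rfl, Nat.factorial_succ]
  push_cast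
  ring

lemma wchA_ratio {k : ℕ} (hk : 2 ≤ k) : 5 / 2 * wchA (k + 1) < wchA k := by
  have hf : (0 : ℝ) < (Nat.factorial (2 * k + 3) : ℝ) := by
    exact_mod_cast Nat.factorial_pos _
  have hkr : (2 : ℝ) ≤ (k : ℝ) := by exact_mod_cast hk
  have hlb := wch_num_lb hk
  have hP : (0 : ℝ) < (3 : ℝ) ^ (2 * k + 3) := by positivity
  have hpow : (3 : ℝ) ^ (2 * (k + 1) + 3) = 9 * (3 : ℝ) ^ (2 * k + 3) := by ring
  have hQ' : (0 : ℝ) ≤ 32 * ((k : ℝ) + 1) ^ 3 + 96 * ((k : ℝ) + 1) ^ 2 + 88 * ((k : ℝ) + 1) + 27 := by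
    positivity
  unfold wchA
  rw [wch_fact_succ k]
  push_cast
  rw [mul_div_assoc', div_lt_div_iff₀ (by positivity) (by positivity)]
  nlinarith [mul_pos hP hf, mul_nonneg hQ' hf.le,
    mul_le_mul_of_nonneg_right hlb hf.le,
    mul_nonneg (mul_nonneg (by linarith : (0:ℝ) ≤ 2*(k:ℝ)+4) (by linarith : (0:ℝ) ≤ 2*(k:ℝ)+5)) (mul_nonneg (by linarith : (0:ℝ) ≤ (3:ℝ)^(2*k+3) - 32*(k:ℝ)^3 - 96*(k:ℝ)^2 - 88*(k:ℝ) - 27) hf.le)]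

lemma wchA_hasSum {x : ℝ} (hx : x ≠ 0) :
    HasSum (fun k => (-1 : ℝ) ^ (k + 1) * wchA k * x ^ (2 * k))
      (Real.cos x - (Real.sin x / x) ^ 3) := by
  have hg := (Real.hasSum_sin (3 * x)).sub ((Real.hasSum_sin x).mul_left 3)
  set g : ℕ → ℝ := fun n => (-1 : ℝ) ^ n * (3 * x) ^ (2 * n + 1) / (Nat.factorial (2 * n + 1) : ℝ)
      - 3 * ((-1 : ℝ) ^ n * x ^ (2 * n + 1) / (Nat.factorial (2 * n + 1) : ℝ)) with hgdef
  have hval : Real.sin (3 * x) - 3 * Real.sin x = -4 * Real.sin x ^ 3 := by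
    rw [Real.sin_three_mul]; ring
  rw [hval] at hg
  have hshift : HasSum (fun n => g (n + 1)) (-4 * Real.sin x ^ 3) := by
    rw [hasSum_nat_add_iff 1]
    simpa [hgdef] using hg
  have hdiv := hshift.mul_left (-1 / (4 * x ^ 3))
  have hfinal := (Real.hasSum_cos x).sub hdiv
  have hv2 : Real.cos x - -1 / (4 * x ^ 3) * (-4 * Real.sin x ^ 3)
      = Real.cos x - (Real.sin x / x) ^ 3 := by
    field_simp
  rw [hv2] at hfinal
  convert hfinal using 1
  · rfl
  funext n
  have hfact : ((Nat.factorial (2 * n + 3)) : ℝ)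
      = (2 * (n : ℝ) + 3) * (2 * (n : ℝ) + 2) * (2 * (n : ℝ) + 1) * (Nat.factorial (2 * n) : ℝ) := by
    rw [show 2 * n + 3 = (2 * n + 2) + 1 from rfl, Nat.factorial_succ,
      show 2 * n + 2 = (2 * n + 1) + 1 from rfl, Nat.factorial_succ,
      show 2 * n + 1 = (2 * n) + 1 from rfl, Nat.factorial_succ]
    push_cast; ring
  have hidx : 2 * (n + 1) + 1 = 2 * n + 3 := by omega
  simp only [hgdef, hidx]
  unfold wchA
  have hfne : ((Nat.factorial (2 * n)) : ℝ) ≠ 0 := by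
    exact_mod_cast (Nat.factorial_pos _).ne'
  rw [hfact]
  have h1 : (0:ℝ) < 2 * (n : ℝ) + 1 := by positivity
  have h2 : (0:ℝ) < 2 * (n : ℝ) + 2 := by positivity
  have h3 : (0:ℝ) < 2 * (n : ℝ) + 3 := by positivity
  field_simp
  ring

lemma alt_sum_pos {b : ℕ → ℝ} {S : ℝ}
    (hS : HasSum (fun j => (-1 : ℝ) ^ j * b j) S)
    (hdec : ∀ j, b (j + 1) < b j) : 0 < S := by
  set f : ℕ → ℝ := fun j => (-1 : ℝ) ^ j * b j with hf
  have hsum : Summable f := hS.summable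
  have he : Summable (fun i => f (2 * i)) :=
    hsum.comp_injective (fun a b h => by omega)
  have ho : Summable (fun i => f (2 * i + 1)) :=
    hsum.comp_injective (fun a b h => by omega)
  have hEO : HasSum f ((∑' i, f (2 * i)) + ∑' i, f (2 * i + 1)) :=
    he.hasSum.even_add_odd ho.hasSum
  have hSval : S = (∑' i, f (2 * i)) + ∑' i, f (2 * i + 1) := hS.unique hEO
  have hpair : HasSum (fun i => f (2 * i) + f (2 * i + 1)) S := by
    rw [hSval]; exact he.hasSum.add ho.hasSum
  have hterm : ∀ i, (0 : ℝ) < f (2 * i) + f (2 * i + 1) := by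
    intro i
    have := hdec (2 * i)
    simp only [hf, pow_add, pow_mul, neg_one_sq, one_pow, pow_one, one_mul]
    nlinarith
  exact hasSum_lt (f := fun _ : ℕ => (0 : ℝ)) (i := 0)
    (fun i => (hterm i).le) (hterm 0) hasSum_zero hpair

lemma alt_sum_lt {b : ℕ → ℝ} {S : ℝ}
    (hS : HasSum (fun j => (-1 : ℝ) ^ j * b j) S)
    (hdec : ∀ j, b (j + 1) < b j) : S < b 0 := by
  have h1 : HasSum (fun j => (-1 : ℝ) ^ (j + 1) * b (j + 1)) (S - b 0) := by
    have h0 : HasSum (fun n => (-1 : ℝ) ^ n * b n)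
        ((S - b 0) + ∑ i ∈ Finset.range 1, (-1 : ℝ) ^ i * b i) := by
      simpa using hS
    have := (hasSum_nat_add_iff (f := fun n => (-1 : ℝ) ^ n * b n) 1).2 h0
    simpa using this
  have h2 : HasSum (fun j => (-1 : ℝ) ^ j * b (j + 1)) (b 0 - S) := by
    have := h1.neg
    convert this using 1
    · rfl
    · funext j; rw [pow_succ]; ring
    · ring
  have := alt_sum_pos h2 (fun j => hdec (j + 1))
  linarith

theorem cos_sub_sinx_div_x_cubed_error :
    ∀ x ∈ Set.Ioo (0 : ℝ) (π / 2), ∀ m : ℕ, 2 ≤ m →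
      |Real.cos x - (Real.sin x / x) ^ 3
          - ∑ k ∈ Finset.Icc 2 m, (-1 : ℝ) ^ (k + 1) * wchA k * x ^ (2 * k)|
        < wchA (m + 1) * x ^ (2 * m + 2) := by
  intro x hx m hm
  obtain ⟨hx0, hxlt⟩ := hx
  have hxne : x ≠ 0 := ne_of_gt hx0
  set f : ℕ → ℝ := fun k => (-1 : ℝ) ^ (k + 1) * wchA k * x ^ (2 * k) with hfdef
  have hsum : HasSum f (Real.cos x - (Real.sin x / x) ^ 3) := wchA_hasSum hxne
  set T := Real.cos x - (Real.sin x / x) ^ 3 with hT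
  -- x² < 5/2
  have hpi : π < 3.15 := Real.pi_lt_d2
  have hx2 : x ^ 2 < 5 / 2 := by nlinarith
  -- the tail terms
  set b : ℕ → ℝ := fun j => wchA (j + (m + 1)) * x ^ (2 * (j + (m + 1))) with hbdef
  have hdec : ∀ j, b (j + 1) < b j := by
    intro j
    have hk : 2 ≤ j + (m + 1) := by omega
    have hk1 : 2 ≤ j + (m + 1) + 1 := by omega
    have hp : (0 : ℝ) < x ^ (2 * (j + (m + 1))) := by positivity
    have hA1 : 0 < wchA (j + (m + 1) + 1) := wchA_pos hk1
    have hr := wchA_ratio hk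
    have hidx : j + 1 + (m + 1) = (j + (m + 1)) + 1 := by omega
    have hexp : 2 * (j + 1 + (m + 1)) = 2 * (j + (m + 1)) + 2 := by omega
    simp only [hbdef, hidx, hexp]
    calc wchA ((j + (m + 1)) + 1) * x ^ (2 * (j + (m + 1)) + 2)
        = (wchA ((j + (m + 1)) + 1) * x ^ 2) * x ^ (2 * (j + (m + 1))) := by
          rw [pow_add]; ring
      _ < (5 / 2 * wchA ((j + (m + 1)) + 1)) * x ^ (2 * (j + (m + 1))) := by
          apply mul_lt_mul_of_pos_right _ hp
          nlinarith
      _ < wchA (j + (m + 1)) * x ^ (2 * (j + (m + 1))) :=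
          mul_lt_mul_of_pos_right hr hp
  -- tail of the series
  have h0 : HasSum f ((T - ∑ i ∈ Finset.range (m + 1), f i) + ∑ i ∈ Finset.range (m + 1), f i) := by
    simpa using hsum
  have htail : HasSum (fun j => f (j + (m + 1))) (T - ∑ i ∈ Finset.range (m + 1), f i) :=
    (hasSum_nat_add_iff (f := f) (m + 1)).2 h0
  have hb : HasSum (fun j => (-1 : ℝ) ^ j * b j)
      ((-1 : ℝ) ^ m * (T - ∑ i ∈ Finset.range (m + 1), f i)) := by
    have := htail.mul_left ((-1 : ℝ) ^ m)
    convert this using 1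
    · rfl
    funext j
    simp only [hfdef, hbdef]
    have hsign : (-1 : ℝ) ^ m * (-1 : ℝ) ^ (j + (m + 1) + 1) = (-1 : ℝ) ^ j := by
      rw [← pow_add, show m + (j + (m + 1) + 1) = j + 2 * (m + 1) from by omega,
        pow_add, pow_mul]
      simp
    calc (-1 : ℝ) ^ j * (wchA (j + (m + 1)) * x ^ (2 * (j + (m + 1))))
        = ((-1 : ℝ) ^ m * (-1 : ℝ) ^ (j + (m + 1) + 1)) *
            (wchA (j + (m + 1)) * x ^ (2 * (j + (m + 1)))) := by rw [hsign]
      _ = (-1 : ℝ) ^ m * ((-1 : ℝ) ^ (j + (m + 1) + 1) * wchA (j + (m + 1)) *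
            x ^ (2 * (j + (m + 1)))) := by ring
  have hSpos := alt_sum_pos hb hdec
  have hSlt := alt_sum_lt hb hdec
  -- identify the finite sums
  have hA0 : wchA 0 = 0 := by unfold wchA; norm_num
  have hA1 : wchA 1 = 0 := by unfold wchA; norm_num
  have hsumeq : ∑ i ∈ Finset.range (m + 1), f i = ∑ k ∈ Finset.Icc 2 m, f k := by
    rw [← Finset.Ico_add_one_right_eq_Icc, ← Finset.sum_range_add_sum_Ico f (by omega : 2 ≤ m + 1)]
    simp [hfdef, Finset.sum_range_succ, hA0, hA1]
  have key : |T - ∑ i ∈ Finset.range (m + 1), f i| < b 0 := by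
    have h1 : |T - ∑ i ∈ Finset.range (m + 1), f i|
        = (-1 : ℝ) ^ m * (T - ∑ i ∈ Finset.range (m + 1), f i) := by
      rw [← abs_of_pos hSpos, abs_mul, abs_pow, abs_neg, abs_one, one_pow, one_mul]
    rw [h1]; exact hSlt
  have hb0 : b 0 = wchA (m + 1) * x ^ (2 * m + 2) := by
    simp only [hbdef, show (0:ℕ) + (m + 1) = m + 1 from by omega,
      show 2 * (m + 1) = 2 * m + 2 from by omega]
  rw [hsumeq, hb0] at key
  simpa only [hfdef] using key
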